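/- Let d be an odd prime, ρ a density matrix on ℂ^d⊗ℂ^d, |Φ⁺⟩ = (1/√d)Σ_m|mm⟩, and k ∈ {0,...,d−1}. Define F̃₂ = Σ_{j}⟨ĵ_k ĵ_k*|ρ|ĵ_k ĵ_k*⟩ − 1/d − Σ' γ̃_{mm'nn'} √(⟨m'n'|ρ|m'n'⟩⟨mn|ρ|mn⟩), where the sum Σ' runs over indices with m≠m', m≠n, n≠n', n'≠m', and γ̃_{mm'nn'} = 1/d if (m−m'−n+n') ≡ 0 (mod d) and 0 otherwise. Then F̃₂ ≤ (1/d)Σ_{m≠n}⟨mm|ρ|nn⟩, and hence ⟨Φ⁺|ρ|Φ⁺⟩ ≥ (1/d)Σ_m⟨mm|ρ|mm⟩ + F̃₂. -/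

import Mathlib

open Matrix
open scoped ComplexOrder

/-- Component `m` of the Wootters–Fields basis vector `|ĵ_k⟩`. -/
noncomputable def wfComp (d : ℕ) (k j m : Fin d) : ℂ :=
  ((1 / Real.sqrt d : ℝ) : ℂ) *
    Complex.exp (2 * Real.pi * Complex.I *
      (((j.val * m.val + k.val * m.val ^ 2 : ℕ) : ℂ)) / d)

/-- The product vector `|ĵ_k ĵ'_k*⟩ = |ĵ_k⟩ ⊗ |ĵ'_k*⟩` on `ℂ^d ⊗ ℂ^d`. -/
noncomputable def wfPair (d : ℕ) (k j j' : Fin d) : Fin d × Fin d → ℂ :=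
  fun p => wfComp d k j p.1 * (starRingEnd ℂ) (wfComp d k j' p.2)

/-- `γ̃_{mm'nn'} = 1/d` if `(m−m'−n+n') ≡ 0 (mod d)` and `0` otherwise. -/
noncomputable def gammaCoef (d : ℕ) (m m' n n' : Fin d) : ℝ :=
  if ((m.val : ℤ) - (m'.val : ℤ) - (n.val : ℤ) + (n'.val : ℤ)) % (d : ℤ) = 0
  then 1 / d else 0

section Aux

variable {d : ℕ}

lemma wfComp_eq (k j m : Fin d) :
    wfComp d k j m = ((1 / Real.sqrt d : ℝ) : ℂ) *
      Complex.exp (2*Real.pi*Complex.I / d) ^ ((j.val * m.val + k.val * m.val ^ 2 : ℕ) : ℤ) := by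
  rw [wfComp, zpow_natCast, ← Complex.exp_nat_mul]
  ring_nf

lemma conj_omega_zpow (n : ℤ) :
    (starRingEnd ℂ) (Complex.exp (2*Real.pi*Complex.I / d) ^ n)
      = Complex.exp (2*Real.pi*Complex.I / d) ^ (-n) := by
  rw [map_zpow₀, ← Complex.exp_conj]
  have : (starRingEnd ℂ) (2*Real.pi*Complex.I / d) = -(2*Real.pi*Complex.I / d) := by
    simp only [map_div₀, _root_.map_mul, Complex.conj_I, Complex.conj_ofReal, map_ofNat,
      Complex.conj_natCast]
    ring
  rw [this, Complex.exp_neg, _root_.inv_zpow, ← _root_.zpow_neg]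

lemma char_sum (hd : d ≠ 0) (A : ℤ) :
    ∑ j : Fin d, Complex.exp (2*Real.pi*Complex.I / d) ^ ((j : ℤ) * A)
      = if (d:ℤ) ∣ A then (d : ℂ) else 0 := by
  set ω := Complex.exp (2*Real.pi*Complex.I / d) with hω
  have hprim : IsPrimitiveRoot ω d := Complex.isPrimitiveRoot_exp d hd
  have h1 : ∀ j : Fin d, ω ^ ((j : ℤ) * A) = (ω ^ A) ^ (j : ℕ) := by
    intro j
    rw [mul_comm, _root_.zpow_mul, zpow_natCast]
  simp_rw [h1, Fin.sum_univ_eq_sum_range (fun i => (ω ^ A) ^ i)]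
  by_cases h : (d:ℤ) ∣ A
  · rw [if_pos h, (hprim.zpow_eq_one_iff_dvd A).2 h]
    simp
  · rw [if_neg h]
    have hne : ω ^ A ≠ 1 := fun hc => h ((hprim.zpow_eq_one_iff_dvd A).1 hc)
    rw [geom_sum_eq hne]
    have hpow : (ω ^ A) ^ d = 1 := by
      rw [← zpow_natCast (ω ^ A) d, ← _root_.zpow_mul, mul_comm, _root_.zpow_mul,
        zpow_natCast, hprim.pow_eq_one, _root_.one_zpow]
    rw [hpow]; simp

lemma csq (hd : d ≠ 0) :
    ((1 / Real.sqrt d : ℝ) : ℂ) * ((1 / Real.sqrt d : ℝ) : ℂ) = 1 / (d : ℂ) := by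
  rw [← Complex.ofReal_mul]
  have : (1 / Real.sqrt d : ℝ) * (1 / Real.sqrt d : ℝ) = 1 / (d : ℝ) := by
    rw [div_mul_div_comm, one_mul, Real.mul_self_sqrt (Nat.cast_nonneg d)]
  rw [this]
  push_cast
  ring

lemma pair_key (k m n m' n' j : Fin d) :
    (starRingEnd ℂ) (wfPair d k j j (m', n')) * wfPair d k j j (m, n)
      = (((1 / Real.sqrt d : ℝ) : ℂ) * ((1 / Real.sqrt d : ℝ) : ℂ))
          * (((1 / Real.sqrt d : ℝ) : ℂ) * ((1 / Real.sqrt d : ℝ) : ℂ)) *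
        (Complex.exp (2*Real.pi*Complex.I/d)
            ^ ((k:ℤ) * ((m:ℤ)^2 - (m':ℤ)^2 - (n:ℤ)^2 + (n':ℤ)^2)) *
          Complex.exp (2*Real.pi*Complex.I/d) ^ ((j:ℤ) * ((m:ℤ) - m' - n + n'))) := by
  have hω0 : Complex.exp (2*Real.pi*Complex.I / d) ≠ 0 := Complex.exp_ne_zero _
  simp only [wfPair, wfComp_eq, _root_.map_mul, Complex.conj_conj, conj_omega_zpow,
    Complex.conj_ofReal]
  rw [show ∀ (w x y z : ℂ), (((1 / Real.sqrt d : ℝ) : ℂ) * w * (((1 / Real.sqrt d : ℝ) : ℂ) * x))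
        * ((((1 / Real.sqrt d : ℝ) : ℂ) * y) * (((1 / Real.sqrt d : ℝ) : ℂ) * z))
      = (((1 / Real.sqrt d : ℝ) : ℂ) * ((1 / Real.sqrt d : ℝ) : ℂ))
        * (((1 / Real.sqrt d : ℝ) : ℂ) * ((1 / Real.sqrt d : ℝ) : ℂ)) * (w * x * y * z)
    from fun _ _ _ _ => by ring]
  congr 1
  rw [← zpow_add₀ hω0, ← zpow_add₀ hω0, ← zpow_add₀ hω0, ← zpow_add₀ hω0]
  congr 1
  push_cast
  ring

lemma pair_sum (hd : d ≠ 0) (k m n m' n' : Fin d) :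
    ∑ j : Fin d, (starRingEnd ℂ) (wfPair d k j j (m', n')) * wfPair d k j j (m, n)
      = if (d:ℤ) ∣ ((m:ℤ) - m' - n + n')
        then Complex.exp (2*Real.pi*Complex.I/d)
            ^ ((k:ℤ) * ((m:ℤ)^2 - (m':ℤ)^2 - (n:ℤ)^2 + (n':ℤ)^2)) / d
        else 0 := by
  simp_rw [pair_key k m n m' n', ← Finset.mul_sum, mul_comm
    (Complex.exp (2*Real.pi*Complex.I/d)
      ^ ((k:ℤ) * ((m:ℤ)^2 - (m':ℤ)^2 - (n:ℤ)^2 + (n':ℤ)^2)))]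
  rw [char_sum hd, csq hd]
  by_cases h : (d:ℤ) ∣ ((m:ℤ) - m' - n + n')
  · rw [if_pos h, if_pos h]
    have hd0 : (d : ℂ) ≠ 0 := Nat.cast_ne_zero.mpr hd
    field_simp
  · rw [if_neg h, if_neg h, zero_mul, mul_zero]

open scoped MatrixOrder in
lemma psd_diag_entry {ι : Type*} [Fintype ι] [DecidableEq ι] {ρ : Matrix ι ι ℂ}
    (hρ : ρ.PosSemidef) (p q : ι) :
    0 ≤ (ρ p p).re ∧ ‖ρ p q‖ ≤ Real.sqrt ((ρ p p).re * (ρ q q).re) := by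
  classical
  set B := CFC.sqrt ρ with hBdef
  have hBH : B.conjTranspose = B := (nonneg_iff_posSemidef.mp (CFC.sqrt_nonneg ρ)).1
  have hBB : B * B = ρ := CFC.sqrt_mul_sqrt_self ρ hρ.nonneg
  let F : ι → EuclideanSpace ℂ ι := fun a => (WithLp.equiv 2 (ι → ℂ)).symm (fun i => B i a)
  have hinner : ∀ a b : ι, (inner ℂ (F a) (F b) : ℂ) = ρ a b := by
    intro a b
    have hsym : ∀ (i c : ι), (starRingEnd ℂ) (B i c) = B c i := by
      intro i c
      conv_rhs => rw [← hBH]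
      simp [Matrix.conjTranspose_apply]
    rw [← hBB, PiLp.inner_apply]
    simp only [RCLike.inner_apply, Matrix.mul_apply, F, WithLp.equiv_symm_apply, PiLp.toLp_apply, hsym]
    exact Finset.sum_congr rfl fun x _ => mul_comm _ _
  have hpp : (ρ p p).re = ‖F p‖^2 := by
    rw [← hinner p p, @inner_self_eq_norm_sq_to_K ℂ]; norm_cast
  have hqq : (ρ q q).re = ‖F q‖^2 := by
    rw [← hinner q q, @inner_self_eq_norm_sq_to_K ℂ]; norm_cast
  constructor
  · rw [hpp]; positivity
  · have h2 := norm_inner_le_norm (𝕜 := ℂ) (F p) (F q)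
    rw [hinner p q] at h2
    rw [hpp, hqq]
    calc ‖ρ p q‖ ≤ ‖F p‖ * ‖F q‖ := h2
    _ = Real.sqrt (‖F p‖^2 * ‖F q‖^2) := by
        rw [Real.sqrt_mul (sq_nonneg _), Real.sqrt_sq (norm_nonneg _),
          Real.sqrt_sq (norm_nonneg _)]

lemma sum4_swap {M : Type*} [AddCommMonoid M] {α : Type*} [Fintype α]
    (f : α → α → α → α → M) :
    ∑ a, ∑ b, ∑ c, ∑ e, f a b c e = ∑ c, ∑ e, ∑ a, ∑ b, f a b c e := by
  calc ∑ a, ∑ b, ∑ c, ∑ e, f a b c e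
      = ∑ a, ∑ c, ∑ b, ∑ e, f a b c e :=
        Finset.sum_congr rfl fun a _ => Finset.sum_comm
    _ = ∑ c, ∑ a, ∑ b, ∑ e, f a b c e := Finset.sum_comm
    _ = ∑ c, ∑ a, ∑ e, ∑ b, f a b c e :=
        Finset.sum_congr rfl fun c _ => Finset.sum_congr rfl fun a _ => Finset.sum_comm
    _ = ∑ c, ∑ e, ∑ a, ∑ b, f a b c e :=
        Finset.sum_congr rfl fun c _ => Finset.sum_comm

end Aux

theorem stmt_14 (d : ℕ) (hd : d.Prime) (hodd : Odd d) (k : Fin d)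
    (ρ : Matrix (Fin d × Fin d) (Fin d × Fin d) ℂ) (hρ : ρ.PosSemidef)
    (htr : ∑ m : Fin d, ∑ n : Fin d, ρ (m, n) (m, n) = 1)
    (Φ : Fin d × Fin d → ℂ)
    (hΦ : ∀ p : Fin d × Fin d,
      Φ p = if p.1 = p.2 then ((1 / Real.sqrt d : ℝ) : ℂ) else 0)
    (F₂t : ℝ)
    (hF₂t : F₂t = (∑ j : Fin d, star (wfPair d k j j) ⬝ᵥ ρ *ᵥ wfPair d k j j).re
      - 1 / d
      - ∑ m : Fin d, ∑ n : Fin d, ∑ m' : Fin d, ∑ n' : Fin d,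
          if m ≠ m' ∧ m ≠ n ∧ n ≠ n' ∧ n' ≠ m'
          then gammaCoef d m m' n n' *
            Real.sqrt ((ρ ((m', n')) ((m', n'))).re * (ρ ((m, n)) ((m, n))).re)
          else 0) :
    F₂t ≤ ((1 / (d : ℂ)) * ∑ m : Fin d, ∑ n : Fin d,
        if m ≠ n then ρ (m, m) (n, n) else 0).re ∧
    (star Φ ⬝ᵥ ρ *ᵥ Φ).re ≥
      (1 / (d : ℝ)) * ∑ m : Fin d, (ρ ((m, m)) ((m, m))).re + F₂t := by
  have hd0 : d ≠ 0 := hd.ne_zero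
  have hdC : (d : ℂ) ≠ 0 := Nat.cast_ne_zero.mpr hd0
  have hdR : (0:ℝ) < d := by positivity
  have hcast : (1/(d:ℂ)) = ((1/d : ℝ) : ℂ) := by push_cast; ring
  have hfin : ∀ a b : Fin d, (a:ℤ) = (b:ℤ) → a = b := by
    intro a b h
    exact Fin.ext (by exact_mod_cast h)
  have hbd : ∀ a : Fin d, 0 ≤ (a:ℤ) ∧ (a:ℤ) < d := by
    intro a
    exact ⟨Int.ofNat_nonneg _, by exact_mod_cast a.2⟩
  have hsmall : ∀ x : ℤ, (d:ℤ) ∣ x → -(d:ℤ) < x → x < d → x = 0 := by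
    intro x hx h1 h2
    exact Int.eq_zero_of_abs_lt_dvd hx (abs_lt.mpr ⟨h1, h2⟩)
  -- master coefficient
  set Fc : Fin d → Fin d → Fin d → Fin d → ℂ := fun m n m' n' =>
    (if (d:ℤ) ∣ ((m:ℤ) - m' - n + n')
      then Complex.exp (2*Real.pi*Complex.I/d)
          ^ ((k:ℤ) * ((m:ℤ)^2 - (m':ℤ)^2 - (n:ℤ)^2 + (n':ℤ)^2)) / d
      else 0) * ρ (m', n') (m, n) with hFcdef
  -- Claim 1 : rewriting the j-sum
  have hS : (∑ j : Fin d, star (wfPair d k j j) ⬝ᵥ ρ *ᵥ wfPair d k j j)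
      = ∑ m : Fin d, ∑ n : Fin d, ∑ m' : Fin d, ∑ n' : Fin d, Fc m n m' n' := by
    have expand : ∀ j : Fin d, star (wfPair d k j j) ⬝ᵥ ρ *ᵥ wfPair d k j j
        = ∑ p : Fin d × Fin d, ∑ q : Fin d × Fin d,
            (starRingEnd ℂ) (wfPair d k j j p) * wfPair d k j j q * ρ p q := by
      intro j
      simp only [dotProduct, mulVec, dotProduct, Pi.star_apply, RCLike.star_def,
        Finset.mul_sum]
      exact Finset.sum_congr rfl fun p _ => Finset.sum_congr rfl fun q _ => by ring
    calc (∑ j : Fin d, star (wfPair d k j j) ⬝ᵥ ρ *ᵥ wfPair d k j j)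
        = ∑ j : Fin d, ∑ p : Fin d × Fin d, ∑ q : Fin d × Fin d,
            (starRingEnd ℂ) (wfPair d k j j p) * wfPair d k j j q * ρ p q :=
          Finset.sum_congr rfl fun j _ => expand j
      _ = ∑ p : Fin d × Fin d, ∑ q : Fin d × Fin d, ∑ j : Fin d,
            (starRingEnd ℂ) (wfPair d k j j p) * wfPair d k j j q * ρ p q := by
          rw [Finset.sum_comm]
          exact Finset.sum_congr rfl fun p _ => Finset.sum_comm
      _ = ∑ p : Fin d × Fin d, ∑ q : Fin d × Fin d,
            (∑ j : Fin d, (starRingEnd ℂ) (wfPair d k j j p) * wfPair d k j j q) * ρ p q := by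
          simp_rw [Finset.sum_mul]
      _ = ∑ m' : Fin d, ∑ n' : Fin d, ∑ m : Fin d, ∑ n : Fin d, Fc m n m' n' := by
          rw [Fintype.sum_prod_type]
          refine Finset.sum_congr rfl fun m' _ => ?_
          refine Finset.sum_congr rfl fun n' _ => ?_
          rw [Fintype.sum_prod_type]
          refine Finset.sum_congr rfl fun m _ => ?_
          refine Finset.sum_congr rfl fun n _ => ?_
          rw [pair_sum hd0 k m n m' n']
      _ = ∑ m : Fin d, ∑ n : Fin d, ∑ m' : Fin d, ∑ n' : Fin d, Fc m n m' n' :=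
          sum4_swap _
  have hSre : (∑ j : Fin d, star (wfPair d k j j) ⬝ᵥ ρ *ᵥ wfPair d k j j).re
      = ∑ m : Fin d, ∑ n : Fin d, ∑ m' : Fin d, ∑ n' : Fin d, (Fc m n m' n').re := by
    rw [hS]
    simp [Complex.re_sum]
  -- the bounding families
  set D : Fin d → Fin d → Fin d → Fin d → ℝ := fun m n m' n' =>
    if m = m' ∧ n = n' then (1/(d:ℝ)) * (ρ (m, n) (m, n)).re else 0 with hDdef
  set H : Fin d → Fin d → Fin d → Fin d → ℝ := fun m n m' n' =>
    if m = n ∧ m' = n' ∧ m ≠ m' then (1/(d:ℝ)) * (ρ (m', n') (m, n)).re else 0 with hHdef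
  set G : Fin d → Fin d → Fin d → Fin d → ℝ := fun m n m' n' =>
    if m ≠ m' ∧ m ≠ n ∧ n ≠ n' ∧ n' ≠ m'
    then gammaCoef d m m' n n' *
      Real.sqrt ((ρ ((m', n')) ((m', n'))).re * (ρ ((m, n)) ((m, n))).re)
    else 0 with hGdef
  -- termwise bound
  have key : ∀ m n m' n' : Fin d,
      (Fc m n m' n').re ≤ D m n m' n' + H m n m' n' + G m n m' n' := by
    intro m n m' n'
    by_cases hdvd : (d:ℤ) ∣ ((m:ℤ) - m' - n + n')
    · by_cases hdiag : m = m' ∧ n = n'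
      · -- diagonal case
        obtain ⟨h1, h2⟩ := hdiag
        subst h1; subst h2
        have e2 : ((k:ℤ) * ((m:ℤ)^2 - (m:ℤ)^2 - (n:ℤ)^2 + (n:ℤ)^2)) = 0 := by ring
        have hFeq : Fc m n m n = (1/(d:ℂ)) * ρ (m, n) (m, n) := by
          simp only [hFcdef, e2, zpow_zero, if_pos hdvd]
        have hre : (Fc m n m n).re = (1/(d:ℝ)) * (ρ (m, n) (m, n)).re := by
          rw [hFeq, hcast, Complex.re_ofReal_mul]
        have hDeq : D m n m n = (1/(d:ℝ)) * (ρ (m, n) (m, n)).re := by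
          simp [hDdef]
        have hHeq : H m n m n = 0 := by
          simp only [hHdef]
          rw [if_neg]
          rintro ⟨-, -, h⟩
          exact h rfl
        have hGeq : G m n m n = 0 := by
          simp only [hGdef]
          rw [if_neg]
          rintro ⟨h, -⟩
          exact h rfl
        rw [hre, hDeq, hHeq, hGeq]
        linarith
      · by_cases hphi : m = n ∧ m' = n'
        · -- Φ case
          obtain ⟨h1, h2⟩ := hphi
          subst h1; subst h2
          have hne : m ≠ m' := fun h => hdiag ⟨h, h⟩
          have e2 : ((k:ℤ) * ((m:ℤ)^2 - (m':ℤ)^2 - (m:ℤ)^2 + (m':ℤ)^2)) = 0 := by ring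
          have hFeq : Fc m m m' m' = (1/(d:ℂ)) * ρ (m', m') (m, m) := by
            simp only [hFcdef, e2, zpow_zero, if_pos hdvd]
          have hre : (Fc m m m' m').re = (1/(d:ℝ)) * (ρ (m', m') (m, m)).re := by
            rw [hFeq, hcast, Complex.re_ofReal_mul]
          have hDeq : D m m m' m' = 0 := by
            simp only [hDdef]
            rw [if_neg]
            rintro ⟨h, -⟩
            exact hne h
          have hHeq : H m m m' m' = (1/(d:ℝ)) * (ρ (m', m') (m, m)).re := by
            simp [hHdef, hne]
          have hGeq : G m m m' m' = 0 := by
            simp only [hGdef]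
            rw [if_neg]
            rintro ⟨-, h, -⟩
            exact h rfl
          rw [hre, hDeq, hHeq, hGeq]
          linarith
        · -- cross case
          have hbm := hbd m; have hbn := hbd n; have hbm' := hbd m'; have hbn' := hbd n'
          have hmm' : m ≠ m' := by
            intro h
            have hz : (m:ℤ) = m' := by rw [h]
            have h4 : (d:ℤ) ∣ ((n':ℤ) - n) := by
              have e : (m:ℤ) - m' - n + n' = (n':ℤ) - n := by rw [hz]; ring
              rwa [e] at hdvd
            have h5 : (n':ℤ) - n = 0 := hsmall _ h4 (by omega) (by omega)
            exact hdiag ⟨h, (hfin n n' (by omega))⟩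
          have hnn' : n ≠ n' := by
            intro h
            have hz : (n:ℤ) = n' := by rw [h]
            have h4 : (d:ℤ) ∣ ((m:ℤ) - m') := by
              have e : (m:ℤ) - m' - n + n' = (m:ℤ) - m' := by rw [hz]; ring
              rwa [e] at hdvd
            have h5 : (m:ℤ) - m' = 0 := hsmall _ h4 (by omega) (by omega)
            exact hdiag ⟨hfin m m' (by omega), h⟩
          have hmn : m ≠ n := by
            intro h
            have hz : (m:ℤ) = n := by rw [h]
            have h4 : (d:ℤ) ∣ ((n':ℤ) - m') := by
              have e : (m:ℤ) - m' - n + n' = (n':ℤ) - m' := by rw [hz]; ring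
              rwa [e] at hdvd
            have h5 : (n':ℤ) - m' = 0 := hsmall _ h4 (by omega) (by omega)
            exact hphi ⟨h, hfin m' n' (by omega)⟩
          have hn'm' : n' ≠ m' := by
            intro h
            have hz : (n':ℤ) = m' := by rw [h]
            have h4 : (d:ℤ) ∣ ((m:ℤ) - n) := by
              have e : (m:ℤ) - m' - n + n' = (m:ℤ) - n := by rw [hz]; ring
              rwa [e] at hdvd
            have h5 : (m:ℤ) - n = 0 := hsmall _ h4 (by omega) (by omega)
            exact hphi ⟨hfin m n (by omega), h.symm⟩
          have habs1 : ‖(Complex.exp (2*Real.pi*Complex.I/d)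
              ^ ((k:ℤ) * ((m:ℤ)^2 - (m':ℤ)^2 - (n:ℤ)^2 + (n':ℤ)^2)))‖ = 1 := by
            rw [Complex.norm_zpow, Complex.norm_exp]
            norm_num [Complex.div_re, Complex.mul_re, Complex.mul_im]
          have hγ : gammaCoef d m m' n n' = 1 / d := by
            rw [gammaCoef, if_pos (Int.emod_eq_zero_of_dvd hdvd)]
          have hDeq : D m n m' n' = 0 := by
            simp only [hDdef]
            rw [if_neg]
            rintro ⟨h, -⟩
            exact hmm' h
          have hHeq : H m n m' n' = 0 := by
            simp only [hHdef]
            rw [if_neg]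
            rintro ⟨h, -⟩
            exact hmn h
          have hGeq : G m n m' n' = (1/(d:ℝ)) *
              Real.sqrt ((ρ (m', n') (m', n')).re * (ρ (m, n) (m, n)).re) := by
            simp only [hGdef]
            rw [if_pos (⟨hmm', hmn, hnn', hn'm'⟩ : m ≠ m' ∧ m ≠ n ∧ n ≠ n' ∧ n' ≠ m'), hγ]
          have hb1 : (Fc m n m' n').re ≤ ‖Fc m n m' n'‖ :=
            Complex.re_le_norm _
          have hb2 : ‖Fc m n m' n'‖
              = (1/(d:ℝ)) * ‖ρ (m', n') (m, n)‖ := by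
            simp only [hFcdef, if_pos hdvd]
            rw [norm_mul, norm_div, habs1, Complex.norm_natCast]
          have hb3 := (psd_diag_entry hρ (m', n') (m, n)).2
          rw [hDeq, hHeq, hGeq]
          have hdinv : (0:ℝ) ≤ 1/(d:ℝ) := by positivity
          calc (Fc m n m' n').re ≤ (1/(d:ℝ)) * ‖ρ (m', n') (m, n)‖ := by
                rw [← hb2]; exact hb1
            _ ≤ (1/(d:ℝ)) * Real.sqrt ((ρ (m', n') (m', n')).re * (ρ (m, n) (m, n)).re) := by
                exact mul_le_mul_of_nonneg_left hb3 hdinv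
            _ ≤ 0 + 0 + (1/(d:ℝ)) *
                Real.sqrt ((ρ (m', n') (m', n')).re * (ρ (m, n) (m, n)).re) := by
                linarith
    · -- coefficient vanishes
      have hFc0 : Fc m n m' n' = 0 := by
        simp only [hFcdef, if_neg hdvd, zero_mul]
      rw [hFc0]
      simp only [Complex.zero_re]
      have hD0 : D m n m' n' = 0 := by
        simp only [hDdef]
        rw [if_neg]
        rintro ⟨h1, h2⟩
        exact hdvd (by rw [h1, h2]; simp)
      have hH0 : H m n m' n' = 0 := by
        simp only [hHdef]
        rw [if_neg]
        rintro ⟨h1, h2, h3⟩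
        exact hdvd (by rw [h1, h2]; simp)
      have hG0 : (0:ℝ) ≤ G m n m' n' := by
        simp only [hGdef]
        split
        · have hγ : gammaCoef d m m' n n' = 0 := by
            rw [gammaCoef, if_neg]
            intro hmod
            exact hdvd (Int.dvd_of_emod_eq_zero hmod)
          rw [hγ, zero_mul]
        · exact le_refl 0
      linarith
  -- sum the termwise bound
  have hsum_le : (∑ m : Fin d, ∑ n : Fin d, ∑ m' : Fin d, ∑ n' : Fin d, (Fc m n m' n').re)
      ≤ (∑ m : Fin d, ∑ n : Fin d, ∑ m' : Fin d, ∑ n' : Fin d, D m n m' n')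
        + (∑ m : Fin d, ∑ n : Fin d, ∑ m' : Fin d, ∑ n' : Fin d, H m n m' n')
        + (∑ m : Fin d, ∑ n : Fin d, ∑ m' : Fin d, ∑ n' : Fin d, G m n m' n') := by
    have step : (∑ m : Fin d, ∑ n : Fin d, ∑ m' : Fin d, ∑ n' : Fin d, (Fc m n m' n').re)
        ≤ ∑ m : Fin d, ∑ n : Fin d, ∑ m' : Fin d, ∑ n' : Fin d,
            (D m n m' n' + H m n m' n' + G m n m' n') :=
      Finset.sum_le_sum fun m _ => Finset.sum_le_sum fun n _ =>
        Finset.sum_le_sum fun m' _ => Finset.sum_le_sum fun n' _ => key m n m' n'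
    simpa [Finset.sum_add_distrib] using step
  -- ∑ D = 1/d
  have hDsum : (∑ m : Fin d, ∑ n : Fin d, ∑ m' : Fin d, ∑ n' : Fin d, D m n m' n')
      = 1/(d:ℝ) := by
    have hcol : ∀ m n : Fin d, ∑ m' : Fin d, ∑ n' : Fin d, D m n m' n'
        = (1/(d:ℝ)) * (ρ (m, n) (m, n)).re := by
      intro m n
      simp [hDdef, ite_and, Finset.sum_ite_eq]
    simp_rw [hcol, ← Finset.mul_sum]
    have htr' : ∑ m : Fin d, ∑ n : Fin d, (ρ (m, n) (m, n)).re = 1 := by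
      have := congrArg Complex.re htr
      simpa [Complex.re_sum] using this
    rw [htr', mul_one]
  -- ∑ H = real part of the Φ⁺ off-diagonal sum
  have hHsum : (∑ m : Fin d, ∑ n : Fin d, ∑ m' : Fin d, ∑ n' : Fin d, H m n m' n')
      = ((1 / (d : ℂ)) * ∑ m : Fin d, ∑ n : Fin d,
          if m ≠ n then ρ (m, m) (n, n) else 0).re := by
    have hRHS : ((1 / (d : ℂ)) * ∑ m : Fin d, ∑ n : Fin d,
          if m ≠ n then ρ (m, m) (n, n) else 0).re
        = ∑ m : Fin d, ∑ n : Fin d,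
            (if m ≠ n then (1/(d:ℝ)) * (ρ (m, m) (n, n)).re else 0) := by
      rw [hcast, Complex.re_ofReal_mul, Complex.re_sum, Finset.mul_sum]
      refine Finset.sum_congr rfl fun m _ => ?_
      rw [Complex.re_sum, Finset.mul_sum]
      refine Finset.sum_congr rfl fun n _ => ?_
      split <;> simp
    rw [hRHS]
    have hcol : ∀ m n : Fin d, ∑ m' : Fin d, ∑ n' : Fin d, H m n m' n'
        = if m = n then (∑ m' : Fin d,
            if m ≠ m' then (1/(d:ℝ)) * (ρ (m', m') (m, m)).re else 0) else 0 := by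
      intro m n
      by_cases hmn : m = n
      · subst hmn
        rw [if_pos rfl]
        refine Finset.sum_congr rfl fun m' _ => ?_
        simp only [hHdef]
        by_cases h : m ≠ m'
        · rw [if_pos h]
          simp [Finset.sum_ite_eq, ite_and, h]
        · rw [if_neg h]
          push_neg at h
          simp [hHdef, h]
      · rw [if_neg hmn]
        refine Finset.sum_eq_zero fun m' _ => Finset.sum_eq_zero fun n' _ => ?_
        simp only [hHdef]
        rw [if_neg]
        rintro ⟨h, -⟩
        exact hmn h
    simp_rw [hcol]
    have hcol2 : ∀ m : Fin d, (∑ n : Fin d, if m = n then (∑ m' : Fin d,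
        if m ≠ m' then (1/(d:ℝ)) * (ρ (m', m') (m, m)).re else 0) else 0)
        = ∑ m' : Fin d, if m ≠ m' then (1/(d:ℝ)) * (ρ (m', m') (m, m)).re else 0 := by
      intro m
      simp [Finset.sum_ite_eq]
    simp_rw [hcol2]
    rw [Finset.sum_comm]
    refine Finset.sum_congr rfl fun m _ => Finset.sum_congr rfl fun n _ => ?_
    refine if_congr ⟨fun h => h.symm, fun h => h.symm⟩ rfl rfl
  -- ∑ G is the γ-sum
  have hGsum : (∑ m : Fin d, ∑ n : Fin d, ∑ m' : Fin d, ∑ n' : Fin d, G m n m' n')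
      = ∑ m : Fin d, ∑ n : Fin d, ∑ m' : Fin d, ∑ n' : Fin d,
          (if m ≠ m' ∧ m ≠ n ∧ n ≠ n' ∧ n' ≠ m'
          then gammaCoef d m m' n n' *
            Real.sqrt ((ρ ((m', n')) ((m', n'))).re * (ρ ((m, n)) ((m, n))).re)
          else 0) := by
    simp only [hGdef]
  -- Part 1
  have part1 : F₂t ≤ ((1 / (d : ℂ)) * ∑ m : Fin d, ∑ n : Fin d,
      if m ≠ n then ρ (m, m) (n, n) else 0).re := by
    rw [hF₂t, hSre, ← hGsum]
    have : (1:ℝ)/d = 1/(d:ℝ) := by norm_num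
    rw [this, ← hDsum, ← hHsum]
    linarith
  refine ⟨part1, ?_⟩
  -- Part 2
  have hdiagsum : ∀ (f : (Fin d × Fin d) → ℂ),
      (∑ p : Fin d × Fin d, if p.1 = p.2 then f p else 0) = ∑ m : Fin d, f (m, m) := by
    intro f
    rw [Fintype.sum_prod_type]
    simp [Finset.sum_ite_eq]
  have hPhi : star Φ ⬝ᵥ ρ *ᵥ Φ
      = (1/(d:ℂ)) * ∑ m : Fin d, ∑ n : Fin d, ρ (m, m) (n, n) := by
    have expand : star Φ ⬝ᵥ ρ *ᵥ Φ
        = ∑ p : Fin d × Fin d, ∑ q : Fin d × Fin d,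
            (starRingEnd ℂ) (Φ p) * Φ q * ρ p q := by
      simp only [dotProduct, mulVec, dotProduct, Pi.star_apply, RCLike.star_def,
        Finset.mul_sum]
      exact Finset.sum_congr rfl fun p _ => Finset.sum_congr rfl fun q _ => by ring
    have hΦ' : ∀ p : Fin d × Fin d,
        (starRingEnd ℂ) (Φ p) = if p.1 = p.2 then ((1 / Real.sqrt d : ℝ) : ℂ) else 0 := by
      intro p
      rw [hΦ p]
      split <;> simp [Complex.conj_ofReal]
    calc star Φ ⬝ᵥ ρ *ᵥ Φ
        = ∑ p : Fin d × Fin d, ∑ q : Fin d × Fin d,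
            (starRingEnd ℂ) (Φ p) * Φ q * ρ p q := expand
      _ = ∑ p : Fin d × Fin d, (if p.1 = p.2 then
            ((1 / Real.sqrt d : ℝ) : ℂ) * ∑ q : Fin d × Fin d,
              (if q.1 = q.2 then ((1 / Real.sqrt d : ℝ) : ℂ) * ρ p q else 0) else 0) := by
          refine Finset.sum_congr rfl fun p _ => ?_
          rw [hΦ']
          by_cases hp : p.1 = p.2
          · rw [if_pos hp, if_pos hp, Finset.mul_sum]
            refine Finset.sum_congr rfl fun q _ => ?_
            rw [hΦ q]
            by_cases hq : q.1 = q.2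
            · rw [if_pos hq, if_pos hq]
              ring
            · rw [if_neg hq, if_neg hq]
              ring
          · rw [if_neg hp, if_neg hp]
            exact Finset.sum_eq_zero fun q _ => by ring
      _ = ∑ m : Fin d, ((1 / Real.sqrt d : ℝ) : ℂ) * ∑ q : Fin d × Fin d,
            (if q.1 = q.2 then ((1 / Real.sqrt d : ℝ) : ℂ) * ρ (m, m) q else 0) :=
          hdiagsum _
      _ = ∑ m : Fin d, ((1 / Real.sqrt d : ℝ) : ℂ) * ∑ n : Fin d,
            ((1 / Real.sqrt d : ℝ) : ℂ) * ρ (m, m) (n, n) := by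
          refine Finset.sum_congr rfl fun m _ => ?_
          rw [hdiagsum]
      _ = (1/(d:ℂ)) * ∑ m : Fin d, ∑ n : Fin d, ρ (m, m) (n, n) := by
          rw [Finset.mul_sum]
          refine Finset.sum_congr rfl fun m _ => ?_
          rw [Finset.mul_sum, Finset.mul_sum]
          refine Finset.sum_congr rfl fun n _ => ?_
          rw [← csq hd0]
          ring
  have hsplit : ∀ m : Fin d, ∑ n : Fin d, (ρ (m, m) (n, n)).re
      = (ρ (m, m) (m, m)).re
        + ∑ n : Fin d, (if m ≠ n then (ρ (m, m) (n, n)).re else 0) := by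
    intro m
    have : ∀ n : Fin d, (ρ (m, m) (n, n)).re
        = (if m = n then (ρ (m, m) (n, n)).re else 0)
          + (if m ≠ n then (ρ (m, m) (n, n)).re else 0) := by
      intro n
      by_cases h : m = n <;> simp [h]
    rw [Finset.sum_congr rfl fun n _ => this n, Finset.sum_add_distrib, Finset.sum_ite_eq]
    simp
  have hPhire : (star Φ ⬝ᵥ ρ *ᵥ Φ).re
      = (1/(d:ℝ)) * (∑ m : Fin d, (ρ (m, m) (m, m)).re)
        + ((1 / (d : ℂ)) * ∑ m : Fin d, ∑ n : Fin d,
            if m ≠ n then ρ (m, m) (n, n) else 0).re := by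
    rw [hPhi, hcast, Complex.re_ofReal_mul, Complex.re_ofReal_mul]
    rw [Complex.re_sum, Complex.re_sum]
    simp_rw [Complex.re_sum, hsplit]
    rw [Finset.sum_add_distrib, mul_add]
    congr 2
    refine Finset.sum_congr rfl fun m _ => Finset.sum_congr rfl fun n _ => ?_
    split <;> simp
  rw [ge_iff_le, hPhire]
  have : (1/(d:ℝ)) * ∑ m : Fin d, (ρ (m, m) (m, m)).re
      = (1/(d:ℝ)) * (∑ m : Fin d, (ρ (m, m) (m, m)).re) := rfl
  linarith [part1]
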